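/- Let a > 0, b > 0 and α > β > 0 be real numbers, let δ > 0, and let θ′ : (0, δ) → (0, ∞) be a function satisfying a·θ′(θ)^α + b·θ′(θ)^β = a·θ^α for all θ ∈ (0, δ) and θ′(θ) → 0 as θ → 0⁺. Then θ′(θ) is asymptotically (a/b)^{1/β}·θ^{α/β}, i.e. θ′(θ) / ((a/b)^{1/β}·θ^{α/β}) → 1 as θ → 0⁺. -/

import Mathlib

open Filter Topology

/-- If `θ' : (0, δ) → (0, ∞)` satisfies `a θ'(θ)^α + b θ'(θ)^β = a θ^α` and
`θ'(θ) → 0` as `θ → 0⁺`, with `a, b > 0` and `α > β > 0`, then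
`θ'(θ) ~ (a/b)^(1/β) · θ^(α/β)` as `θ → 0⁺`. -/
theorem stmt_8 (a b α β δ : ℝ) (ha : 0 < a) (hb : 0 < b) (hβ : 0 < β) (hαβ : β < α)
    (hδ : 0 < δ) (θ' : ℝ → ℝ)
    (hpos : ∀ θ ∈ Set.Ioo (0 : ℝ) δ, 0 < θ' θ)
    (heq : ∀ θ ∈ Set.Ioo (0 : ℝ) δ, a * θ' θ ^ α + b * θ' θ ^ β = a * θ ^ α)
    (hlim : Tendsto θ' (𝓝[>] (0 : ℝ)) (𝓝 0)) :
    Tendsto (fun θ => θ' θ / ((a / b) ^ (1 / β) * θ ^ (α / β)))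
      (𝓝[>] (0 : ℝ)) (𝓝 1) := by
  have hβ' : β ≠ 0 := ne_of_gt hβ
  have hα : (0:ℝ) < α := hβ.trans hαβ
  have hmem : ∀ᶠ θ in 𝓝[>] (0 : ℝ), θ ∈ Set.Ioo (0 : ℝ) δ :=
    Ioo_mem_nhdsGT_of_mem (Set.left_mem_Ico.mpr hδ)
  set t : ℝ → ℝ := fun θ => θ' θ ^ α / θ ^ α with ht
  -- t → 0
  have hub : ∀ᶠ θ in 𝓝[>] (0 : ℝ), t θ ≤ a / b * θ' θ ^ (α - β) := by
    filter_upwards [hmem] with θ hθ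
    have hθ0 : 0 < θ := hθ.1
    have hθ'0 : 0 < θ' θ := hpos θ hθ
    have h1 : b * θ' θ ^ β ≤ a * θ ^ α := by
      have := heq θ hθ
      nlinarith [Real.rpow_pos_of_pos hθ'0 α]
    have hsplit : θ' θ ^ α = θ' θ ^ (α - β) * θ' θ ^ β := by
      rw [← Real.rpow_add hθ'0]; ring_nf
    rw [ht]
    rw [div_le_iff₀ (Real.rpow_pos_of_pos hθ0 α), hsplit]
    have hb' : 0 < θ' θ ^ (α - β) := Real.rpow_pos_of_pos hθ'0 _
    calc θ' θ ^ (α - β) * θ' θ ^ β ≤ θ' θ ^ (α - β) * (a / b * θ ^ α) := by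
          apply mul_le_mul_of_nonneg_left _ hb'.le
          rw [div_mul_eq_mul_div, le_div_iff₀ hb]
          linarith
      _ = a / b * θ' θ ^ (α - β) * θ ^ α := by ring
  have hlb : ∀ᶠ θ in 𝓝[>] (0 : ℝ), 0 ≤ t θ := by
    filter_upwards [hmem] with θ hθ
    exact div_nonneg (Real.rpow_pos_of_pos (hpos θ hθ) α).le
      (Real.rpow_pos_of_pos hθ.1 α).le
  have hgt : Tendsto (fun θ => a / b * θ' θ ^ (α - β)) (𝓝[>] (0 : ℝ)) (𝓝 0) := by
    have hc : ContinuousAt (fun x : ℝ => x ^ (α - β)) 0 :=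
      Real.continuousAt_rpow_const 0 (α - β) (Or.inr (by linarith))
    have h0 : Tendsto (fun θ => θ' θ ^ (α - β)) (𝓝[>] (0 : ℝ)) (𝓝 0) := by
      have := hc.tendsto.comp hlim
      simpa [Function.comp_def, Real.zero_rpow (by linarith : α - β ≠ 0)] using this
    simpa using h0.const_mul (a / b)
  have ht0 : Tendsto t (𝓝[>] (0 : ℝ)) (𝓝 0) :=
    tendsto_of_tendsto_of_tendsto_of_le_of_le' tendsto_const_nhds hgt hlb hub
  -- key identity
  have hkey : ∀ᶠ θ in 𝓝[>] (0 : ℝ),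
      θ' θ / ((a / b) ^ (1 / β) * θ ^ (α / β)) = (1 - t θ) ^ (1 / β) := by
    filter_upwards [hmem] with θ hθ
    have hθ0 : 0 < θ := hθ.1
    have hθ'0 : 0 < θ' θ := hpos θ hθ
    have hEq := heq θ hθ
    have h1 : θ' θ ^ β = a / b * (θ ^ α - θ' θ ^ α) := by
      field_simp; linarith
    have hsub : 0 < θ ^ α - θ' θ ^ α := by
      have : 0 < b * θ' θ ^ β := mul_pos hb (Real.rpow_pos_of_pos hθ'0 β)
      nlinarith
    have h2 : θ' θ = ((a / b) * (θ ^ α - θ' θ ^ α)) ^ (1 / β) := by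
      rw [← h1, ← Real.rpow_mul hθ'0.le, mul_one_div, div_self hβ', Real.rpow_one]
    have hab : (0:ℝ) ≤ a / b := (div_pos ha hb).le
    rw [h2, Real.mul_rpow hab hsub.le]
    have hθα : θ ^ (α / β) = (θ ^ α) ^ (1 / β) := by
      rw [← Real.rpow_mul hθ0.le]
      congr 1; field_simp
    rw [hθα, mul_div_mul_left _ _ (ne_of_gt (Real.rpow_pos_of_pos (div_pos ha hb) _)),
      ← Real.div_rpow hsub.le (Real.rpow_pos_of_pos hθ0 α).le]
    congr 1
    have hθαne : θ ^ α ≠ 0 := ne_of_gt (Real.rpow_pos_of_pos hθ0 α)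
    field_simp [ht]
    simp only [t]
    field_simp
  -- conclude
  have hfin : Tendsto (fun θ => (1 - t θ) ^ (1 / β)) (𝓝[>] (0 : ℝ)) (𝓝 1) := by
    have h1 : Tendsto (fun θ => 1 - t θ) (𝓝[>] (0 : ℝ)) (𝓝 1) := by
      have := ht0.const_sub 1
      simpa using this
    have hc : ContinuousAt (fun x : ℝ => x ^ (1 / β)) 1 :=
      Real.continuousAt_rpow_const 1 (1 / β) (Or.inl one_ne_zero)
    have := hc.tendsto.comp h1
    simpa [Function.comp_def, Real.one_rpow] using this
  exact hfin.congr' (hkey.mono fun θ h => h.symm)
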